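/- Let H be a complex Hilbert space, let A, B₀, B₁ ∈ B(H) with B₀ and B₁ positive, and let 0 ≤ θ ≤ 1. Then ‖B₁^{1−θ} ∘ A ∘ B₀^{θ}‖ ≤ ‖B₁ ∘ A‖^{1−θ} · ‖A ∘ B₀‖^{θ}. -/

import Mathlib

open scoped ENNReal NNReal

lemma my_spectralRadius_mul_comm {R A : Type*} [NormedField R] [Ring A] [Algebra R A]
    (a b : A) : spectralRadius R (a * b) = spectralRadius R (b * a) := by
  have key : ∀ x y : A, spectralRadius R (x * y) ≤ spectralRadius R (y * x) := by
    intro x y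
    rw [spectralRadius, spectralRadius]
    refine iSup₂_le fun k hk => ?_
    rcases eq_or_ne k 0 with rfl | h
    · simp
    · have hk' : k ∈ spectrum R (y * x) := by
        have h2 : k ∈ spectrum R (x * y) \ {0} := ⟨hk, h⟩
        rw [spectrum.nonzero_mul_comm] at h2
        exact h2.1
      exact le_iSup₂ (f := fun k (_ : k ∈ spectrum R (y * x)) => (‖k‖₊ : ℝ≥0∞)) k hk'
  exact le_antisymm (key a b) (key b a)


lemma rpow_diff_est {x M a s t : ℝ} (hx : 0 ≤ x) (hxM : x ≤ M) (ha : 0 < a)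
    (has : a ≤ s) (hst : s ≤ t) (ht1 : t ≤ 1) :
    |x ^ t - x ^ s| ≤ (1 / a + max M 1 ^ 3) * (t - s) := by
  have hM1 : (1:ℝ) ≤ max M 1 := le_max_right _ _
  have hM0 : (0:ℝ) ≤ max M 1 := zero_le_one.trans hM1
  have hs0 : 0 < s := lt_of_lt_of_le ha has
  have ht0 : 0 < t := lt_of_lt_of_le hs0 hst
  have hts0 : 0 ≤ t - s := by linarith
  have hC : 0 ≤ 1 / a + max M 1 ^ 3 := by positivity
  rcases le_total x 1 with hx1 | hx1
  · rcases eq_or_lt_of_le hx with rfl | hx0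
    · rw [Real.zero_rpow (ne_of_gt ht0), Real.zero_rpow (ne_of_gt hs0)]
      simpa using mul_nonneg hC hts0
    · -- 0 < x ≤ 1
      have hts : x ^ t ≤ x ^ s := Real.rpow_le_rpow_of_exponent_ge hx0 hx1 hst
      rw [abs_sub_comm, abs_of_nonneg (sub_nonneg.mpr hts)]
      have key1 : x ^ t = x ^ s * x ^ (t - s) := by
        rw [← Real.rpow_add hx0]; ring_nf
      have hlog : 0 ≤ -Real.log x := by
        have := Real.log_nonpos hx0.le hx1; linarith
      have h1 : 1 - x ^ (t - s) ≤ (t - s) * (-Real.log x) := by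
        have h := Real.log_le_sub_one_of_pos (Real.rpow_pos_of_pos hx0 (t - s))
        rw [Real.log_rpow hx0] at h
        linarith
      have h2 : x ^ s * (-Real.log x) ≤ 1 / a := by
        have hxs_le : x ^ s ≤ x ^ a := Real.rpow_le_rpow_of_exponent_ge hx0 hx1 has
        have hxa : 0 < x ^ a := Real.rpow_pos_of_pos hx0 a
        have step : x ^ a * (-Real.log x) ≤ 1 / a := by
          have hinv := Real.log_le_sub_one_of_pos (inv_pos.mpr hxa)
          rw [Real.log_inv] at hinv
          -- -log (x^a) ≤ (x^a)⁻¹ - 1 ≤ (x^a)⁻¹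
          rw [Real.log_rpow hx0] at hinv
          -- hinv : -(a * log x) ≤ (x^a)⁻¹ - 1
          have hmul : x ^ a * (a * (-Real.log x)) ≤ x ^ a * (x ^ a)⁻¹ := by
            apply mul_le_mul_of_nonneg_left _ hxa.le
            have h3 : (0:ℝ) < (x ^ a)⁻¹ := inv_pos.mpr hxa
            linarith
          rw [mul_inv_cancel₀ (ne_of_gt hxa)] at hmul
          rw [div_eq_inv_mul, ← mul_le_mul_iff_right₀ ha]
          calc a * (x ^ a * (-Real.log x)) = x ^ a * (a * (-Real.log x)) := by ring
            _ ≤ 1 := hmul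
            _ = a * (a⁻¹ * 1) := by field_simp
        calc x ^ s * (-Real.log x) ≤ x ^ a * (-Real.log x) :=
              mul_le_mul_of_nonneg_right hxs_le hlog
          _ ≤ 1 / a := step
      have hxs0 : 0 ≤ x ^ s := (Real.rpow_pos_of_pos hx0 s).le
      calc x ^ s - x ^ t = x ^ s * (1 - x ^ (t - s)) := by rw [key1]; ring
        _ ≤ x ^ s * ((t - s) * (-Real.log x)) := mul_le_mul_of_nonneg_left h1 hxs0
        _ = x ^ s * (-Real.log x) * (t - s) := by ring
        _ ≤ 1 / a * (t - s) := mul_le_mul_of_nonneg_right h2 hts0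
        _ ≤ (1 / a + max M 1 ^ 3) * (t - s) := by
            apply mul_le_mul_of_nonneg_right _ hts0
            have : (0:ℝ) ≤ max M 1 ^ 3 := by positivity
            linarith
  · -- 1 ≤ x
    have hx0 : 0 < x := lt_of_lt_of_le zero_lt_one hx1
    have hxM1 : x ≤ max M 1 := le_trans hxM (le_max_left _ _)
    have hst' : x ^ s ≤ x ^ t := Real.rpow_le_rpow_of_exponent_le hx1 hst
    rw [abs_of_nonneg (sub_nonneg.mpr hst')]
    have key1 : x ^ t = x ^ s * x ^ (t - s) := by
      rw [← Real.rpow_add hx0]; ring_nf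
    have hlogx : 0 ≤ Real.log x := Real.log_nonneg hx1
    have hlogxM : Real.log x ≤ max M 1 := by
      have := Real.log_le_sub_one_of_pos hx0; linarith
    set u := (t - s) * Real.log x with hu
    have hu0 : 0 ≤ u := mul_nonneg hts0 hlogx
    have hexpu : x ^ (t - s) = Real.exp u := by
      rw [Real.rpow_def_of_pos hx0, hu]; ring_nf
    have hexp1 : Real.exp u - 1 ≤ u * Real.exp u := by
      have h3 := Real.add_one_le_exp (-u)
      have h4 : (0:ℝ) < Real.exp u := Real.exp_pos u
      have h5 : Real.exp (-u) * Real.exp u = 1 := by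
        rw [← Real.exp_add]; simp
      nlinarith
    have hxts_le : x ^ (t - s) ≤ max M 1 := by
      calc x ^ (t - s) ≤ x ^ (1:ℝ) :=
            Real.rpow_le_rpow_of_exponent_le hx1 (by linarith)
        _ = x := Real.rpow_one x
        _ ≤ max M 1 := hxM1
    have hxs_le : x ^ s ≤ max M 1 := by
      calc x ^ s ≤ x ^ (1:ℝ) := Real.rpow_le_rpow_of_exponent_le hx1 (by linarith)
        _ = x := Real.rpow_one x
        _ ≤ max M 1 := hxM1
    have hxs0 : 0 ≤ x ^ s := (Real.rpow_pos_of_pos hx0 s).le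
    have hM1' : (1:ℝ) ≤ max M 1 := le_max_right _ _
    have hM0 : (0:ℝ) ≤ max M 1 := zero_le_one.trans hM1'
    calc x ^ t - x ^ s = x ^ s * (x ^ (t - s) - 1) := by rw [key1]; ring
      _ ≤ x ^ s * (u * Real.exp u) := by
          apply mul_le_mul_of_nonneg_left _ hxs0
          rw [hexpu] at *
          linarith [hexp1]
      _ = x ^ s * (x ^ (t - s)) * Real.log x * (t - s) := by rw [hexpu, hu]; ring
      _ ≤ max M 1 * max M 1 * max M 1 * (t - s) := by
          apply mul_le_mul_of_nonneg_right _ hts0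
          have h6 : 0 ≤ x ^ (t - s) := (Real.rpow_pos_of_pos hx0 (t - s)).le
          exact mul_le_mul (mul_le_mul hxs_le hxts_le h6 hM0) hlogxM hlogx
            (by positivity)
      _ = max M 1 ^ 3 * (t - s) := by ring
      _ ≤ (1 / a + max M 1 ^ 3) * (t - s) := by
          apply mul_le_mul_of_nonneg_right _ hts0
          have : (0:ℝ) ≤ 1 / a := by positivity
          linarith

section Aux

variable {H : Type*} [NormedAddCommGroup H] [InnerProductSpace ℂ H] [CompleteSpace H]

noncomputable def cp (B : H →L[ℂ] H) (t : ℝ) : H →L[ℂ] H := cfc (fun x : ℝ => x ^ t) B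

lemma contOn_rpow {t : ℝ} (ht : 0 ≤ t) (s : Set ℝ) : ContinuousOn (fun x : ℝ => x ^ t) s := by
  rcases eq_or_lt_of_le ht with rfl | ht'
  · simpa [Real.rpow_zero] using (continuousOn_const : ContinuousOn (fun _ : ℝ => (1:ℝ)) s)
  · exact fun x _ => (Real.continuousAt_rpow_const x t (Or.inr ht'.le)).continuousWithinAt

lemma spec_nonneg {B : H →L[ℂ] H} (hB : B.IsPositive) ⦃x : ℝ⦄ (hx : x ∈ spectrum ℝ B) :
    0 ≤ x :=
  spectrum_nonneg_of_nonneg ((ContinuousLinearMap.nonneg_iff_isPositive B).mpr hB) hx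

lemma cp_sa {B : H →L[ℂ] H} (t : ℝ) : IsSelfAdjoint (cp B t) := cfc_predicate _ B

lemma cp_mul {B : H →L[ℂ] H} (hB : B.IsPositive) {s t : ℝ} (hs : 0 ≤ s) (ht : 0 ≤ t) :
    cp B s * cp B t = cp B (s + t) := by
  rw [cp, cp, cp, ← cfc_mul _ _ B (contOn_rpow hs _) (contOn_rpow ht _)]
  apply cfc_congr
  intro x hx
  have hx0 : 0 ≤ x := spec_nonneg hB hx
  rcases eq_or_lt_of_le (add_nonneg hs ht) with h0 | h0
  · obtain ⟨rfl, rfl⟩ : s = 0 ∧ t = 0 := ⟨by linarith, by linarith⟩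
    simp [Real.rpow_zero]
  · exact (Real.rpow_add' hx0 (ne_of_gt h0)).symm

lemma cp_zero {B : H →L[ℂ] H} (hB : B.IsPositive) : cp B 0 = 1 := by
  rw [cp]
  have : (fun x : ℝ => x ^ (0:ℝ)) = (1 : ℝ → ℝ) := by
    funext x; simp [Real.rpow_zero]
  rw [this, cfc_one ℝ B hB.isSelfAdjoint]

lemma cp_one {B : H →L[ℂ] H} (hB : B.IsPositive) : cp B 1 = B := by
  rw [cp]
  have : (fun x : ℝ => x ^ (1:ℝ)) = (fun x : ℝ => x) := by
    funext x; simp [Real.rpow_one]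
  rw [this, cfc_id' ℝ B hB.isSelfAdjoint]


lemma spec_le_norm [Nontrivial H] {B : H →L[ℂ] H} (hB : B.IsPositive) ⦃x : ℝ⦄
    (hx : x ∈ spectrum ℝ B) : x ≤ ‖B‖ := by
  have h := spectrum.norm_le_norm_of_mem hx
  rwa [Real.norm_of_nonneg (spec_nonneg hB hx)] at h

lemma cp_norm_le [Nontrivial H] {B : H →L[ℂ] H} (hB : B.IsPositive) {t : ℝ}
    (ht0 : 0 ≤ t) (ht1 : t ≤ 1) : ‖cp B t‖ ≤ max ‖B‖ 1 := by
  have hM1 : (1:ℝ) ≤ max ‖B‖ 1 := le_max_right _ _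
  apply norm_cfc_le (by linarith)
  intro x hx
  have hx0 : 0 ≤ x := spec_nonneg hB hx
  rw [Real.norm_of_nonneg (Real.rpow_nonneg hx0 t)]
  rcases le_total x 1 with h | h
  · exact le_trans (Real.rpow_le_one hx0 h ht0) hM1
  · calc x ^ t ≤ x ^ (1:ℝ) := Real.rpow_le_rpow_of_exponent_le h ht1
      _ = x := Real.rpow_one x
      _ ≤ _ := le_trans (spec_le_norm hB hx) (le_max_left _ _)

lemma cp_diff [Nontrivial H] {B : H →L[ℂ] H} (hB : B.IsPositive) {a s t : ℝ} (ha : 0 < a)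
    (has : a ≤ s) (hst : s ≤ t) (ht1 : t ≤ 1) :
    ‖cp B t - cp B s‖ ≤ (1 / a + max ‖B‖ 1 ^ 3) * (t - s) := by
  have hs0 : (0:ℝ) ≤ s := le_of_lt (lt_of_lt_of_le ha has)
  have ht0 : (0:ℝ) ≤ t := le_trans hs0 hst
  rw [cp, cp, ← cfc_sub _ _ B (contOn_rpow ht0 _) (contOn_rpow hs0 _)]
  apply norm_cfc_le
  · have h1 : (0:ℝ) ≤ 1 / a + max ‖B‖ 1 ^ 3 := by positivity
    have h2 : (0:ℝ) ≤ t - s := by linarith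
    positivity
  · intro x hx
    rw [Real.norm_eq_abs]
    exact rpow_diff_est (spec_nonneg hB hx) (spec_le_norm hB hx) ha has hst ht1


lemma key_ineq [Nontrivial H] (A : H →L[ℂ] H) {B₀ B₁ : H →L[ℂ] H}
    (hB₀ : B₀.IsPositive) (hB₁ : B₁.IsPositive) {θ ε : ℝ}
    (hε : 0 ≤ ε) (h1 : 0 ≤ θ - ε) (h2 : θ + ε ≤ 1) :
    ‖cp B₁ (1 - θ) * A * cp B₀ θ‖ ^ 2 ≤
      ‖cp B₁ (1 - (θ + ε)) * A * cp B₀ (θ + ε)‖ *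
        ‖cp B₁ (1 - (θ - ε)) * A * cp B₀ (θ - ε)‖ := by
  have hθ0 : 0 ≤ θ := by linarith
  have he0 : 0 ≤ 1 - θ := by linarith
  rw [show (1:ℝ) - (θ + ε) = (1 - θ) - ε from by ring,
      show (1:ℝ) - (θ - ε) = (1 - θ) + ε from by ring]
  set P := cp B₁ (1 - θ) with hPdef
  set Pp := cp B₁ ((1 - θ) + ε) with hPpdef
  set Pm := cp B₁ ((1 - θ) - ε) with hPmdef
  set Q := cp B₀ θ with hQdef
  set Qp := cp B₀ (θ + ε) with hQpdef
  set Qm := cp B₀ (θ - ε) with hQmdef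
  set sA := star A with hsAdef
  have hPpPm : Pp * Pm = P * P := by
    rw [hPpdef, hPmdef, hPdef, cp_mul hB₁ (by linarith) (by linarith),
      cp_mul hB₁ he0 he0]
    congr 1; ring
  have hQpQm : Qp * Qm = Q * Q := by
    rw [hQpdef, hQmdef, hQdef, cp_mul hB₀ (by linarith) h1, cp_mul hB₀ hθ0 hθ0]
    congr 1; ring
  set X := P * A * Q with hX
  have hsX : star X = Q * sA * P := by
    rw [hX, star_mul, star_mul, (cp_sa (B := B₀) θ).star_eq,
      (cp_sa (B := B₁) (1 - θ)).star_eq, hsAdef]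
    simp [mul_assoc]; rfl
  have hsY : star (Pp * A * Qm) = Qm * sA * Pp := by
    rw [star_mul, star_mul, (cp_sa (B := B₀) (θ - ε)).star_eq,
      (cp_sa (B := B₁) ((1 - θ) + ε)).star_eq, hsAdef]
    simp [mul_assoc]; rfl
  have hrad : spectralRadius ℂ (star X * X) = ((‖X‖₊ * ‖X‖₊ : ℝ≥0) : ℝ≥0∞) := by
    rw [(IsSelfAdjoint.star_mul_self X).spectralRadius_eq_nnnorm,
      CStarRing.nnnorm_star_mul_self]
  have e1 : (P * A * Q) * (Q * sA * P) = (P * A * Qp) * (Qm * sA * P) := by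
    calc (P * A * Q) * (Q * sA * P) = (P * A) * (Q * Q) * (sA * P) := by
          simp only [mul_assoc]
      _ = (P * A) * (Qp * Qm) * (sA * P) := by rw [hQpQm]
      _ = (P * A * Qp) * (Qm * sA * P) := by simp only [mul_assoc]
  have e2 : (Qm * sA * P) * (P * A * Qp) = (Qm * sA * Pp) * (Pm * A * Qp) := by
    calc (Qm * sA * P) * (P * A * Qp) = (Qm * sA) * (P * P) * (A * Qp) := by
          simp only [mul_assoc]
      _ = (Qm * sA) * (Pp * Pm) * (A * Qp) := by rw [hPpPm]
      _ = (Qm * sA * Pp) * (Pm * A * Qp) := by simp only [mul_assoc]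
  have hbound : ((‖X‖₊ * ‖X‖₊ : ℝ≥0) : ℝ≥0∞) ≤
      ((‖Pm * A * Qp‖₊ * ‖Qm * sA * Pp‖₊ : ℝ≥0) : ℝ≥0∞) := by
    calc ((‖X‖₊ * ‖X‖₊ : ℝ≥0) : ℝ≥0∞) = spectralRadius ℂ (star X * X) := hrad.symm
      _ = spectralRadius ℂ ((Q * sA * P) * (P * A * Q)) := by rw [hsX]
      _ = spectralRadius ℂ ((P * A * Q) * (Q * sA * P)) :=
            my_spectralRadius_mul_comm _ _
      _ = spectralRadius ℂ ((P * A * Qp) * (Qm * sA * P)) := by rw [e1]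
      _ = spectralRadius ℂ ((Qm * sA * P) * (P * A * Qp)) :=
            my_spectralRadius_mul_comm _ _
      _ = spectralRadius ℂ ((Qm * sA * Pp) * (Pm * A * Qp)) := by rw [e2]
      _ ≤ (‖(Qm * sA * Pp) * (Pm * A * Qp)‖₊ : ℝ≥0∞) := spectrum.spectralRadius_le_nnnorm (𝕜 := ℂ) _
      _ ≤ ((‖Qm * sA * Pp‖₊ * ‖Pm * A * Qp‖₊ : ℝ≥0) : ℝ≥0∞) := by
            exact_mod_cast nnnorm_mul_le _ _
      _ = ((‖Pm * A * Qp‖₊ * ‖Qm * sA * Pp‖₊ : ℝ≥0) : ℝ≥0∞) := by rw [mul_comm]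
  have hb2 : ‖X‖₊ * ‖X‖₊ ≤ ‖Pm * A * Qp‖₊ * ‖Qm * sA * Pp‖₊ := by
    exact_mod_cast hbound
  have hb3 : ‖X‖ * ‖X‖ ≤ ‖Pm * A * Qp‖ * ‖Qm * sA * Pp‖ := by
    exact_mod_cast hb2
  have hb4 : ‖Qm * sA * Pp‖ = ‖Pp * A * Qm‖ := by
    rw [← hsY, norm_star]
  rw [sq]
  calc ‖X‖ * ‖X‖ ≤ ‖Pm * A * Qp‖ * ‖Qm * sA * Pp‖ := hb3
    _ = ‖Pm * A * Qp‖ * ‖Pp * A * Qm‖ := by rw [hb4]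


lemma endpoint0 [Nontrivial H] (A : H →L[ℂ] H) {B₀ B₁ : H →L[ℂ] H}
    (hB₀ : B₀.IsPositive) (hB₁ : B₁.IsPositive) :
    cp B₁ (1 - (0:ℝ)) * A * cp B₀ (0:ℝ) = B₁ * A := by
  rw [show (1:ℝ) - 0 = 1 from by ring, cp_one hB₁, cp_zero hB₀, mul_one]

lemma endpoint1 [Nontrivial H] (A : H →L[ℂ] H) {B₀ B₁ : H →L[ℂ] H}
    (hB₀ : B₀.IsPositive) (hB₁ : B₁.IsPositive) :
    cp B₁ (1 - (1:ℝ)) * A * cp B₀ (1:ℝ) = A * B₀ := by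
  rw [show (1:ℝ) - 1 = 0 from by ring, cp_zero hB₁, cp_one hB₀, one_mul]

lemma dyadic_bound [Nontrivial H] (A : H →L[ℂ] H) {B₀ B₁ : H →L[ℂ] H}
    (hB₀ : B₀.IsPositive) (hB₁ : B₁.IsPositive) :
    ∀ n k : ℕ, k ≤ 2 ^ n →
      ‖cp B₁ (1 - (k : ℝ) / 2 ^ n) * A * cp B₀ ((k : ℝ) / 2 ^ n)‖ ≤
        ‖B₁ * A‖ ^ (1 - (k : ℝ) / 2 ^ n) * ‖A * B₀‖ ^ ((k : ℝ) / 2 ^ n) := by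
  set f0 := ‖B₁ * A‖ with hf0def
  set f1 := ‖A * B₀‖ with hf1def
  have hf0 : 0 ≤ f0 := norm_nonneg _
  have hf1 : 0 ≤ f1 := norm_nonneg _
  intro n
  induction n with
  | zero =>
    intro k hk
    interval_cases k
    · simp only [Nat.cast_zero, pow_zero, zero_div]
      rw [endpoint0 A hB₀ hB₁, Real.rpow_zero, show (1:ℝ) - 0 = 1 from by ring,
        Real.rpow_one, mul_one]
    · simp only [Nat.cast_one, pow_zero, div_one]
      rw [endpoint1 A hB₀ hB₁, Real.rpow_one, show (1:ℝ) - 1 = 0 from by ring,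
        Real.rpow_zero, one_mul]
  | succ n ih =>
    intro k hk
    rcases Nat.even_or_odd k with ⟨m, rfl⟩ | ⟨m, rfl⟩
    · -- even case : k = m + m
      have hcast : ((m + m : ℕ) : ℝ) / 2 ^ (n + 1) = (m : ℝ) / 2 ^ n := by
        push_cast
        rw [pow_succ]
        field_simp
        ring
      rw [hcast]
      exact ih m (by omega)
    · -- odd case : k = 2 * m + 1
      have hm1 : m + 1 ≤ 2 ^ n := by
        have h2 : 2 * m + 1 ≤ 2 * 2 ^ n := by
          rw [← pow_succ'] at *; omega
        omega
      have hmle : m ≤ 2 ^ n := by omega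
      set θ : ℝ := ((2 * m + 1 : ℕ) : ℝ) / 2 ^ (n + 1) with hθdef
      set ε : ℝ := 1 / 2 ^ (n + 1) with hεdef
      have hεpos : (0:ℝ) < ε := by rw [hεdef]; positivity
      have hsub : θ - ε = (m : ℝ) / 2 ^ n := by
        rw [hθdef, hεdef]; push_cast; rw [pow_succ]; field_simp; ring
      have hadd : θ + ε = ((m + 1 : ℕ) : ℝ) / 2 ^ n := by
        rw [hθdef, hεdef]; push_cast; rw [pow_succ]; field_simp; ring
      have hθpos : 0 < θ := by rw [hθdef]; positivity
      have hθlt1 : θ < 1 := by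
        rw [hθdef, div_lt_one (by positivity)]
        push_cast [pow_succ]
        have : (m:ℝ) + 1 ≤ 2 ^ n := by exact_mod_cast hm1
        nlinarith
      have h1 : 0 ≤ θ - ε := by
        rw [hsub]; positivity
      have h2 : θ + ε ≤ 1 := by
        rw [hadd, div_le_one (by positivity)]
        exact_mod_cast hm1
      have key := key_ineq A hB₀ hB₁ hεpos.le h1 h2
      have ihp := ih (m + 1) hm1
      have ihm := ih m hmle
      rw [← hadd] at ihp
      rw [← hsub] at ihm
      have hcomb : ‖cp B₁ (1 - (θ + ε)) * A * cp B₀ (θ + ε)‖ *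
          ‖cp B₁ (1 - (θ - ε)) * A * cp B₀ (θ - ε)‖ ≤
          (f0 ^ (1 - θ) * f1 ^ θ) ^ 2 := by
        have hr1 : f0 ^ (1 - (θ + ε)) * f0 ^ (1 - (θ - ε)) = (f0 ^ (1 - θ)) ^ 2 := by
          rw [← Real.rpow_natCast (f0 ^ (1 - θ)) 2, ← Real.rpow_mul hf0,
            ← Real.rpow_add' hf0 (show (1 - (θ + ε)) + (1 - (θ - ε)) ≠ 0 by
              nlinarith)]
          congr 1; push_cast; ring
        have hr2 : f1 ^ (θ + ε) * f1 ^ (θ - ε) = (f1 ^ θ) ^ 2 := by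
          rw [← Real.rpow_natCast (f1 ^ θ) 2, ← Real.rpow_mul hf1,
            ← Real.rpow_add' hf1 (show (θ + ε) + (θ - ε) ≠ 0 by nlinarith)]
          congr 1; push_cast; ring
        calc ‖cp B₁ (1 - (θ + ε)) * A * cp B₀ (θ + ε)‖ *
              ‖cp B₁ (1 - (θ - ε)) * A * cp B₀ (θ - ε)‖
            ≤ (f0 ^ (1 - (θ + ε)) * f1 ^ (θ + ε)) *
              (f0 ^ (1 - (θ - ε)) * f1 ^ (θ - ε)) := by
              apply mul_le_mul ihp ihm (norm_nonneg _) (by positivity)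
          _ = (f0 ^ (1 - (θ + ε)) * f0 ^ (1 - (θ - ε))) *
              (f1 ^ (θ + ε) * f1 ^ (θ - ε)) := by ring
          _ = (f0 ^ (1 - θ)) ^ 2 * (f1 ^ θ) ^ 2 := by rw [hr1, hr2]
          _ = (f0 ^ (1 - θ) * f1 ^ θ) ^ 2 := by ring
      have hfinal : ‖cp B₁ (1 - θ) * A * cp B₀ θ‖ ^ 2 ≤
          (f0 ^ (1 - θ) * f1 ^ θ) ^ 2 := le_trans key hcomb
      exact (pow_le_pow_iff_left₀ (norm_nonneg _) (by positivity) (two_ne_zero)).mp hfinal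


lemma f_lip [Nontrivial H] (A : H →L[ℂ] H) {B₀ B₁ : H →L[ℂ] H}
    (hB₀ : B₀.IsPositive) (hB₁ : B₁.IsPositive) {a s t : ℝ}
    (ha : 0 < a) (has : a ≤ s) (hst : s ≤ t) (hta : t ≤ 1 - a) :
    ‖cp B₁ (1 - t) * A * cp B₀ t‖ ≤ ‖cp B₁ (1 - s) * A * cp B₀ s‖ +
      ‖A‖ * ((1 / a + max ‖B₁‖ 1 ^ 3) * max ‖B₀‖ 1 +
        max ‖B₁‖ 1 * (1 / a + max ‖B₀‖ 1 ^ 3)) * (t - s) := by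
  have hs0 : 0 < s := lt_of_lt_of_le ha has
  have ht1 : t ≤ 1 := by linarith
  have hs1 : s ≤ 1 := le_trans hst ht1
  have h1ta : a ≤ 1 - t := by linarith
  have h1ts : 1 - t ≤ 1 - s := by linarith
  have h1s1 : 1 - s ≤ 1 := by linarith
  have hts0 : 0 ≤ t - s := by linarith
  have hA0 : (0:ℝ) ≤ ‖A‖ := norm_nonneg _
  have hK₁ : (0:ℝ) ≤ 1 / a + max ‖B₁‖ 1 ^ 3 := by positivity
  have hK₀ : (0:ℝ) ≤ 1 / a + max ‖B₀‖ 1 ^ 3 := by positivity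
  have hM₀ : (0:ℝ) ≤ max ‖B₀‖ 1 := le_trans zero_le_one (le_max_right _ _)
  have hM₁ : (0:ℝ) ≤ max ‖B₁‖ 1 := le_trans zero_le_one (le_max_right _ _)
  set Pt := cp B₁ (1 - t)
  set Ps := cp B₁ (1 - s)
  set Qt := cp B₀ t
  set Qs := cp B₀ s
  have hPdiff : ‖Pt - Ps‖ ≤ (1 / a + max ‖B₁‖ 1 ^ 3) * (t - s) := by
    rw [norm_sub_rev]
    have := cp_diff hB₁ ha h1ta h1ts h1s1
    calc ‖Ps - Pt‖ ≤ (1 / a + max ‖B₁‖ 1 ^ 3) * ((1 - s) - (1 - t)) := this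
      _ = (1 / a + max ‖B₁‖ 1 ^ 3) * (t - s) := by ring
  have hQdiff : ‖Qt - Qs‖ ≤ (1 / a + max ‖B₀‖ 1 ^ 3) * (t - s) :=
    cp_diff hB₀ ha has hst ht1
  have hQt : ‖Qt‖ ≤ max ‖B₀‖ 1 := cp_norm_le hB₀ (by linarith) ht1
  have hPs : ‖Ps‖ ≤ max ‖B₁‖ 1 := cp_norm_le hB₁ (by linarith) h1s1
  have split : Pt * A * Qt = Ps * A * Qs + ((Pt - Ps) * A * Qt + Ps * A * (Qt - Qs)) := by
    noncomm_ring
  have e1 : ‖(Pt - Ps) * A * Qt‖ ≤ (1 / a + max ‖B₁‖ 1 ^ 3) * (t - s) * ‖A‖ * max ‖B₀‖ 1 := by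
    calc ‖(Pt - Ps) * A * Qt‖ ≤ ‖(Pt - Ps) * A‖ * ‖Qt‖ := norm_mul_le _ _
      _ ≤ ‖Pt - Ps‖ * ‖A‖ * ‖Qt‖ :=
          mul_le_mul_of_nonneg_right (norm_mul_le _ _) (norm_nonneg _)
      _ ≤ (1 / a + max ‖B₁‖ 1 ^ 3) * (t - s) * ‖A‖ * max ‖B₀‖ 1 := by
          apply mul_le_mul (mul_le_mul_of_nonneg_right hPdiff hA0) hQt (norm_nonneg _)
          exact mul_nonneg (mul_nonneg hK₁ hts0) hA0
  have e2 : ‖Ps * A * (Qt - Qs)‖ ≤ max ‖B₁‖ 1 * ‖A‖ * ((1 / a + max ‖B₀‖ 1 ^ 3) * (t - s)) := by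
    calc ‖Ps * A * (Qt - Qs)‖ ≤ ‖Ps * A‖ * ‖Qt - Qs‖ := norm_mul_le _ _
      _ ≤ ‖Ps‖ * ‖A‖ * ‖Qt - Qs‖ :=
          mul_le_mul_of_nonneg_right (norm_mul_le _ _) (norm_nonneg _)
      _ ≤ max ‖B₁‖ 1 * ‖A‖ * ((1 / a + max ‖B₀‖ 1 ^ 3) * (t - s)) := by
          apply mul_le_mul (mul_le_mul_of_nonneg_right hPs hA0) hQdiff (norm_nonneg _)
          exact mul_nonneg hM₁ hA0
  calc ‖Pt * A * Qt‖ ≤ ‖Ps * A * Qs‖ + ‖(Pt - Ps) * A * Qt + Ps * A * (Qt - Qs)‖ := by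
        rw [split]; exact norm_add_le _ _
    _ ≤ ‖Ps * A * Qs‖ + (‖(Pt - Ps) * A * Qt‖ + ‖Ps * A * (Qt - Qs)‖) :=
        add_le_add_right (norm_add_le _ _) _
    _ ≤ ‖Ps * A * Qs‖ + ((1 / a + max ‖B₁‖ 1 ^ 3) * (t - s) * ‖A‖ * max ‖B₀‖ 1 +
        max ‖B₁‖ 1 * ‖A‖ * ((1 / a + max ‖B₀‖ 1 ^ 3) * (t - s))) :=
        add_le_add_right (add_le_add e1 e2) _
    _ = ‖Ps * A * Qs‖ + ‖A‖ * ((1 / a + max ‖B₁‖ 1 ^ 3) * max ‖B₀‖ 1 +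
        max ‖B₁‖ 1 * (1 / a + max ‖B₀‖ 1 ^ 3)) * (t - s) := by ring

end Aux

theorem interpolation_norm_estimate_fractional_powers
    (H : Type*) [NormedAddCommGroup H] [InnerProductSpace ℂ H] [CompleteSpace H]
    (A B₀ B₁ : H →L[ℂ] H) (hB₀ : B₀.IsPositive) (hB₁ : B₁.IsPositive)
    (θ : ℝ) (hθ0 : 0 ≤ θ) (hθ1 : θ ≤ 1) :
    ‖cfc (fun x : ℝ => x ^ (1 - θ)) B₁ ∘L A ∘L cfc (fun x : ℝ => x ^ θ) B₀‖ ≤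
      ‖B₁ ∘L A‖ ^ (1 - θ) * ‖A ∘L B₀‖ ^ θ := by
  rcases subsingleton_or_nontrivial H with hH | hH
  · have hzero : (cfc (fun x : ℝ => x ^ (1 - θ)) B₁ ∘L A ∘L cfc (fun x : ℝ => x ^ θ) B₀) =
        (0 : H →L[ℂ] H) := Subsingleton.elim _ _
    rw [hzero, norm_zero]
    have h1 : (0:ℝ) ≤ ‖B₁ ∘L A‖ := norm_nonneg _
    have h2 : (0:ℝ) ≤ ‖A ∘L B₀‖ := norm_nonneg _
    exact mul_nonneg (Real.rpow_nonneg h1 _) (Real.rpow_nonneg h2 _)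
  · have hgoal : cfc (fun x : ℝ => x ^ (1 - θ)) B₁ ∘L A ∘L cfc (fun x : ℝ => x ^ θ) B₀ =
        cp B₁ (1 - θ) * A * cp B₀ θ := by
      rw [cp, cp]
      rfl
    have hBA : B₁ ∘L A = B₁ * A := rfl
    have hAB : A ∘L B₀ = A * B₀ := rfl
    rw [hgoal, hBA, hAB]
    set f0 := ‖B₁ * A‖ with hf0def
    set f1 := ‖A * B₀‖ with hf1def
    have hf0 : 0 ≤ f0 := norm_nonneg _
    have hf1 : 0 ≤ f1 := norm_nonneg _
    rcases eq_or_lt_of_le hθ0 with hz | hθpos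
    · -- θ = 0
      rw [← hz, show (1:ℝ) - 0 = 1 from by ring]
      rw [show cp B₁ (1:ℝ) * A * cp B₀ (0:ℝ) = B₁ * A from by
        rw [cp_one hB₁, cp_zero hB₀, mul_one], Real.rpow_one, Real.rpow_zero, mul_one]
    rcases eq_or_lt_of_le hθ1 with hz1 | hθlt1
    · -- θ = 1
      rw [hz1, show (1:ℝ) - 1 = 0 from by ring]
      rw [show cp B₁ (0:ℝ) * A * cp B₀ (1:ℝ) = A * B₀ from by
        rw [cp_zero hB₁, cp_one hB₀, one_mul], Real.rpow_one, Real.rpow_zero, one_mul]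
    -- 0 < θ < 1
    set a : ℝ := min (θ / 2) ((1 - θ) / 2) with hadef
    have ha : 0 < a := lt_min (by linarith) (by linarith)
    set C : ℝ := ‖A‖ * ((1 / a + max ‖B₁‖ 1 ^ 3) * max ‖B₀‖ 1 +
      max ‖B₁‖ 1 * (1 / a + max ‖B₀‖ 1 ^ 3)) with hCdef
    have hC0 : 0 ≤ C := by
      rw [hCdef]
      have h1 : (0:ℝ) ≤ 1 / a + max ‖B₁‖ 1 ^ 3 := by positivity
      have h2 : (0:ℝ) ≤ 1 / a + max ‖B₀‖ 1 ^ 3 := by positivity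
      have h3 : (0:ℝ) ≤ max ‖B₀‖ 1 := le_trans zero_le_one (le_max_right _ _)
      have h4 : (0:ℝ) ≤ max ‖B₁‖ 1 := le_trans zero_le_one (le_max_right _ _)
      exact mul_nonneg (norm_nonneg _)
        (add_nonneg (mul_nonneg h1 h3) (mul_nonneg h4 h2))
    set q : ℕ → ℝ := fun n => ((⌊θ * 2 ^ n⌋₊ : ℕ) : ℝ) / 2 ^ n with hqdef
    have hpow : ∀ n : ℕ, (0:ℝ) < 2 ^ n := fun n => by positivity
    have hqle : ∀ n, q n ≤ θ := by
      intro n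
      rw [hqdef]
      rw [div_le_iff₀ (hpow n)]
      exact Nat.floor_le (by positivity)
    have hqge : ∀ n, θ - (1 / 2 : ℝ) ^ n ≤ q n := by
      intro n
      rw [hqdef]
      have h := Nat.lt_floor_add_one (θ * 2 ^ n)
      rw [div_pow, one_pow, sub_le_iff_le_add, ← add_div, le_div_iff₀ (hpow n)]
      linarith
    have hqbound : ∀ n, ⌊θ * 2 ^ n⌋₊ ≤ 2 ^ n := by
      intro n
      have h1 : θ * 2 ^ n ≤ ((2 ^ n : ℕ) : ℝ) := by
        push_cast
        nlinarith [hpow n]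
      calc ⌊θ * 2 ^ n⌋₊ ≤ ⌊((2 ^ n : ℕ) : ℝ)⌋₊ := Nat.floor_le_floor h1
        _ = 2 ^ n := Nat.floor_natCast _
    have hdy : ∀ n, ‖cp B₁ (1 - q n) * A * cp B₀ (q n)‖ ≤ f0 ^ (1 - q n) * f1 ^ (q n) := by
      intro n
      exact dyadic_bound A hB₀ hB₁ n (⌊θ * 2 ^ n⌋₊) (hqbound n)
    have htendhalf : Filter.Tendsto (fun n : ℕ => (1 / 2 : ℝ) ^ n) Filter.atTop (nhds 0) :=
      tendsto_pow_atTop_nhds_zero_of_lt_one (by norm_num) (by norm_num)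
    have hev : ∀ᶠ n in Filter.atTop, (1 / 2 : ℝ) ^ n < θ / 2 :=
      htendhalf.eventually_lt_const (by linarith)
    have htendq : Filter.Tendsto q Filter.atTop (nhds θ) := by
      have hlow : Filter.Tendsto (fun n : ℕ => θ - (1 / 2 : ℝ) ^ n) Filter.atTop (nhds (θ - 0)) :=
        Filter.Tendsto.sub tendsto_const_nhds htendhalf
      rw [sub_zero] at hlow
      exact tendsto_of_tendsto_of_tendsto_of_le_of_le hlow tendsto_const_nhds hqge hqle
    have hevineq : ∀ᶠ n in Filter.atTop,
        ‖cp B₁ (1 - θ) * A * cp B₀ θ‖ ≤ f0 ^ (1 - q n) * f1 ^ (q n) + C * (θ - q n) := by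
      filter_upwards [hev] with n hn
      have hq2 : θ / 2 ≤ q n := by
        have := hqge n; linarith
      have haq : a ≤ q n := le_trans (min_le_left _ _) hq2
      have hθa : θ ≤ 1 - a := by
        have : a ≤ (1 - θ) / 2 := min_le_right _ _
        linarith
      have hflip := f_lip A hB₀ hB₁ ha haq (hqle n) hθa
      calc ‖cp B₁ (1 - θ) * A * cp B₀ θ‖
          ≤ ‖cp B₁ (1 - q n) * A * cp B₀ (q n)‖ + C * (θ - q n) := hflip
        _ ≤ f0 ^ (1 - q n) * f1 ^ (q n) + C * (θ - q n) := by
            have := hdy n; linarith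
    have htendR : Filter.Tendsto (fun n => f0 ^ (1 - q n) * f1 ^ (q n) + C * (θ - q n))
        Filter.atTop (nhds (f0 ^ (1 - θ) * f1 ^ θ)) := by
      have htend2 : Filter.Tendsto (fun n => C * (θ - q n)) Filter.atTop (nhds 0) := by
        have : Filter.Tendsto (fun n => θ - q n) Filter.atTop (nhds (θ - θ)) :=
          Filter.Tendsto.sub tendsto_const_nhds htendq
        rw [sub_self] at this
        simpa using this.const_mul C
      have htend1 : Filter.Tendsto (fun n => f0 ^ (1 - q n) * f1 ^ (q n)) Filter.atTop
          (nhds (f0 ^ (1 - θ) * f1 ^ θ)) := by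
        rcases eq_or_lt_of_le hf0 with hf00 | hf0pos
        · -- f0 = 0
          have heq : ∀ n, f0 ^ (1 - q n) * f1 ^ (q n) = 0 := by
            intro n
            rw [← hf00, Real.zero_rpow (by
              have := hqle n; intro hcon; rw [sub_eq_zero] at hcon
              have : q n = 1 := hcon.symm
              linarith), zero_mul]
          have hval : f0 ^ (1 - θ) * f1 ^ θ = 0 := by
            rw [← hf00, Real.zero_rpow (by intro hcon; rw [sub_eq_zero] at hcon; linarith),
              zero_mul]
          rw [hval]
          exact Filter.Tendsto.congr (fun n => (heq n).symm) tendsto_const_nhds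
        rcases eq_or_lt_of_le hf1 with hf10 | hf1pos
        · -- f1 = 0
          have hval : f0 ^ (1 - θ) * f1 ^ θ = 0 := by
            rw [← hf10, Real.zero_rpow (ne_of_gt hθpos), mul_zero]
          rw [hval]
          apply Filter.Tendsto.congr' _ tendsto_const_nhds
          filter_upwards [hev] with n hn
          have hq2 : 0 < q n := by
            have := hqge n; linarith
          rw [← hf10, Real.zero_rpow (ne_of_gt hq2), mul_zero]
        · -- both positive
          have h1 : Filter.Tendsto (fun n => f0 ^ (1 - q n)) Filter.atTop
              (nhds (f0 ^ (1 - θ))) := by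
            have hc : ContinuousAt (fun y : ℝ => f0 ^ y) (1 - θ) :=
              Real.continuousAt_const_rpow (ne_of_gt hf0pos)
            exact hc.tendsto.comp (Filter.Tendsto.sub tendsto_const_nhds htendq)
          have h2 : Filter.Tendsto (fun n => f1 ^ (q n)) Filter.atTop (nhds (f1 ^ θ)) := by
            have hc : ContinuousAt (fun y : ℝ => f1 ^ y) θ :=
              Real.continuousAt_const_rpow (ne_of_gt hf1pos)
            exact hc.tendsto.comp htendq
          exact h1.mul h2
      simpa using htend1.add htend2
    exact ge_of_tendsto htendR hevineq
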